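/- arXiv:1310.2091 — 4 statements merged into one kernel-verified Lean document; each statement's English description precedes it below -/
import Mathlib

section
/- Let a = (m,ε) be a decorated number with m ≤ n, and let c = (n+1) ⊖ a. If decorated numbers a' ≤ a and c' ≤ c satisfy (n+1,0) ≤ a' ⊕ c', then a' = a and c' = c. -/
/-- Decorations: `-`, no decoration, `+`. -/
inductive Dec : Type
  | neg | zero | pos
  deriving DecidableEq

namespace Dec

/-- The product of decorations: `ε⊗0 = ε`, `ε⊗ε = ε`, `+⊗- = -⊗+ = -`. -/
def otimes : Dec → Dec → Dec
  | zero, e => e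
  | e, zero => e
  | pos, pos => pos
  | neg, neg => neg
  | pos, neg => neg
  | neg, pos => neg

/-- The reversal of decorations: `-(+) = -`, `-(-) = +`, `-(0) = 0`. -/
def rev : Dec → Dec
  | pos => neg
  | neg => pos
  | zero => zero

/-- The dual product of decorations, `(ε₁, ε₂) ↦ -((-ε₁)⊗(-ε₂))`. -/
def dual (e₁ e₂ : Dec) : Dec := rev (otimes (rev e₁) (rev e₂))

/-- Numerical value of a decoration, realizing the order `- < 0 < +`. -/
def val : Dec → ℤ
  | neg => -1
  | zero => 0
  | pos => 1

end Dec

/-- A decorated number is a pair `(n, ε)`, `n ∈ ℕ`, `ε` a decoration. -/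
abbrev DecNum : Type := ℕ × Dec

namespace DecNum

/-- The lexicographic order `⋯ < n⁻ < n < n⁺ < (n+1)⁻ < ⋯` on decorated numbers. -/
def dle (a b : DecNum) : Prop := a.1 < b.1 ∨ (a.1 = b.1 ∧ a.2.val ≤ b.2.val)

/-- The addition `⊞` of decorated numbers: `(n,ε₁) ⊞ (m,ε₂) = (n+m, ε₁⊗ε₂)`. -/
def dadd (a b : DecNum) : DecNum := (a.1 + b.1, Dec.otimes a.2 b.2)

/-- The addition `⊕` of decorated numbers: `(n,ε₁) ⊕ (m,ε₂) = (n+m, -((-ε₁)⊗(-ε₂)))`. -/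
def oadd (a b : DecNum) : DecNum := (a.1 + b.1, Dec.dual a.2 b.2)

/-- The complement `(n+1) ⊖ (m,ε) = (n+1-m, -ε)` of a decorated number. -/
def dsub (n : ℕ) (a : DecNum) : DecNum := (n + 1 - a.1, Dec.rev a.2)

end DecNum

/-- let `a = (m,ε)` with `m ≤ n` and `c = (n+1) ⊖ a`.  If `a' ≤ a`,
`c' ≤ c` and `(n+1,0) ≤ a' ⊕ c'`, then `a' = a` and `c' = c`. -/
theorem decNum_oadd_rigidity (n m : ℕ) (ε : Dec) (h : m ≤ n) (a' c' : DecNum)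
    (ha : DecNum.dle a' (m, ε)) (hc : DecNum.dle c' (DecNum.dsub n (m, ε)))
    (hsum : DecNum.dle (n + 1, Dec.zero) (DecNum.oadd a' c')) :
    a' = (m, ε) ∧ c' = DecNum.dsub n (m, ε) := by
  obtain ⟨m₁, ε₁⟩ := a'
  obtain ⟨m₂, ε₂⟩ := c'
  simp only [DecNum.dle, DecNum.dsub, DecNum.oadd] at *
  have h1 : m₁ = m ∧ m₂ = n + 1 - m := by
    rcases ha with h' | ⟨h', _⟩ <;> rcases hc with h'' | ⟨h'', _⟩ <;>
      rcases hsum with h3 | ⟨h3, _⟩ <;> omega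
  obtain ⟨rfl, rfl⟩ := h1
  have hε1 : ε₁.val ≤ ε.val := by
    rcases ha with h' | ⟨_, h'⟩ <;> omega
  have hε2 : ε₂.val ≤ (Dec.rev ε).val := by
    rcases hc with h' | ⟨_, h'⟩ <;> omega
  have hd : (Dec.zero).val ≤ (Dec.dual ε₁ ε₂).val := by
    rcases hsum with h3 | ⟨_, h3⟩ <;> omega
  have h2 : ε₁ = ε ∧ ε₂ = Dec.rev ε := by
    revert hε1 hε2 hd; cases ε <;> cases ε₁ <;> cases ε₂ <;> decide
  obtain ⟨rfl, rfl⟩ := h2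
  exact ⟨rfl, rfl⟩
end

section
/- For a dimension type D with 0 < dim D = n < ∞, one has (n+1) ⊖ ((n+1) ⊖ D) = D, i.e., n+1 − (n+1 ⊖ D) = D. -/
/-- A (finite) dimension type is encoded by decorated numbers: an undecorated
value at the index `none` (standing for `ℚ`) and a decorated number at each
prime `p` (the value `D(ℤ_p)` together with the `p`-singularity type as
decoration). -/
abbrev EncDimType : Type := Option Nat.Primes → DecNum

/-- The constraints on the encoding of a dimension type: `D(0) = D(ℚ)` has no
decoration, `0` has no decoration, and `1` does not have the `-` decoration. -/
def IsEncDimType (D : EncDimType) : Prop :=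
  (D none).2 = Dec.zero ∧
  ∀ i : Option Nat.Primes, ((D i).1 = 0 → (D i).2 = Dec.zero) ∧
    ((D i).1 = 1 → (D i).2 ≠ Dec.neg)

/-- The contribution of a decorated value `D(p)` to `dim D = sup{D(G) : G ∈ σ}`
over the whole Bockstein basis: for a `p⁺`-singular `D` one has
`D(ℤ_{(p)}) ≥ D(ℤ_{p^∞}) + 1 = D(ℤ_p) + 1`, otherwise the largest value among
the groups at `p` is `D(ℤ_p)` itself (up to the separately counted `D(ℚ)`). -/
def contrib (a : DecNum) : ℕ := if a.2 = Dec.pos then a.1 + 1 else a.1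

/-- `dim D = n` for an encoded dimension type. -/
def encDimEq (D : EncDimType) (n : ℕ) : Prop :=
  (∀ i, contrib (D i) ≤ n) ∧ (∃ i, contrib (D i) = n)

/-- The pointwise operation `D₁ ⊞ D₂`. -/
def encDadd (D₁ D₂ : EncDimType) : EncDimType := fun i => DecNum.dadd (D₁ i) (D₂ i)

/-- The pointwise operation `D₁ ⊕ D₂`. -/
def encOadd (D₁ D₂ : EncDimType) : EncDimType := fun i => DecNum.oadd (D₁ i) (D₂ i)

/-- The pointwise complement `n+1 ⊖ D`, `(n+1 ⊖ D)(p) = (n+1−m, −ε)` for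
`D(p) = (m, ε)`. -/
def encDsub (n : ℕ) (D : EncDimType) : EncDimType := fun i => DecNum.dsub n (D i)

/-- The pointwise order on encoded dimension types. -/
def encLe (D₁ D₂ : EncDimType) : Prop := ∀ i, DecNum.dle (D₁ i) (D₂ i)

/-- The constant dimension type `n` (every group is sent to `n`, undecorated). -/
def encConst (n : ℕ) : EncDimType := fun _ => (n, Dec.zero)

/-- for a dimension type `D` with `0 < dim D = n < ∞`,
`(n+1) ⊖ ((n+1) ⊖ D) = D`. -/
theorem encDsub_encDsub (D : EncDimType) (n : ℕ)
    (hD : IsEncDimType D) (hdim : encDimEq D n) (hn : 0 < n) :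
    encDsub n (encDsub n D) = D := by
  funext i
  have h := hdim.1 i
  have hm : (D i).1 ≤ n := by
    unfold contrib at h
    split at h <;> omega
  unfold encDsub DecNum.dsub
  ext
  · simp; omega
  · simp
    cases (D i).2 <;> rfl
end

section
/- For dimension types D₁, D₂ (functions determined by decorated numbers at each prime and an undecorated rational value), the operation D₁ ⊞ D₂ defined pointwise by adding decorated numbers with decoration product ⊗ yields a dimension type, i.e., ⊞ preserves the property of being p-regular or p±-singular at each prime. -/
/-- for dimension types `D₁`, `D₂`, the pointwise operation
`D₁ ⊞ D₂` yields a dimension type. -/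
theorem encDadd_isDimType (D₁ D₂ : EncDimType)
    (h₁ : IsEncDimType D₁) (h₂ : IsEncDimType D₂) :
    IsEncDimType (encDadd D₁ D₂) := by
  obtain ⟨hz₁, h₁⟩ := h₁
  obtain ⟨hz₂, h₂⟩ := h₂
  refine ⟨?_, fun i => ⟨?_, ?_⟩⟩
  · simp only [encDadd, DecNum.dadd, hz₁, hz₂, Dec.otimes]
  · intro h
    simp only [encDadd, DecNum.dadd] at h ⊢
    have e1 := (h₁ i).1 (by omega)
    have e2 := (h₂ i).1 (by omega)
    rw [e1, e2]; rfl
  · intro h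
    simp only [encDadd, DecNum.dadd] at h ⊢
    rcases Nat.eq_zero_or_pos (D₁ i).1 with h1 | h1
    · have e1 := (h₁ i).1 h1
      have e2 := (h₂ i).2 (by omega)
      rw [e1]; simpa [Dec.otimes] using e2
    · have h2 : (D₂ i).1 = 0 := by omega
      have e2 := (h₂ i).1 h2
      have e1 := (h₁ i).2 (by omega)
      rw [e2]
      cases hd : (D₁ i).2 <;> simp_all [Dec.otimes]
end

section
/- For every dimension type D with n = dim D finite, dim(D ⊞ (n+1 ⊖ D)) ≤ n+1 and n+1 ≤ dim'(D ⊕ (n+1 ⊖ D)) in the sense that (D ⊕ (n+1 ⊖ D))(G) ≥ n+1 for every G in the Bockstein basis, provided dim D > 0. -/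
/-- for a dimension type `D` with `0 < dim D = n < ∞`,
`dim (D ⊞ (n+1 ⊖ D)) ≤ n+1` and `(D ⊕ (n+1 ⊖ D))(G) ≥ n+1` for every `G` in
the Bockstein basis. -/
theorem encDadd_encOadd_dsub (D : EncDimType) (n : ℕ)
    (hD : IsEncDimType D) (hdim : encDimEq D n) (hn : 0 < n) :
    (∀ i, contrib (encDadd D (encDsub n D) i) ≤ n + 1) ∧
    encLe (encConst (n + 1)) (encOadd D (encDsub n D)) := by
  have key : ∀ i, (D i).1 ≤ n := fun i => by
    have h := hdim.1 i
    unfold contrib at h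
    split at h <;> omega
  constructor
  · intro i
    have hk := key i
    rcases hD' : (D i).2 with _|_|_ <;>
      simp [encDadd, encDsub, DecNum.dadd, DecNum.dsub, contrib, Dec.rev, Dec.otimes, hD'] <;>
      omega
  · intro i
    have hk := key i
    rcases hD' : (D i).2 with _|_|_ <;>
      simp [encConst, encOadd, encDsub, DecNum.oadd, DecNum.dsub, DecNum.dle,
        Dec.dual, Dec.rev, Dec.otimes, Dec.val, hD'] <;>
      omega
end
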